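/- The following SDBM is unsatisfiable over the integers: x ≡ 0 (mod 20), y ≡ 0 (mod 35), z ≡ 0 (mod 28), 0 ≤ y - x ≤ 5, 20 ≤ x - z ≤ 24, 21 ≤ y - z ≤ 28, even though its underlying system of inequalities is satisfiable over ℤ and the system is GCD-tight and path-closed. -/
import Mathlib


/-- The SDBM `x ≡ 0 (mod 20)`, `y ≡ 0 (mod 35)`, `z ≡ 0 (mod 28)`,
`0 ≤ y - x ≤ 5`, `20 ≤ x - z ≤ 24`, `21 ≤ y - z ≤ 28` is unsatisfiable over ℤ,
even though its underlying system of inequalities is satisfiable over ℤ. -/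
theorem sdbm_counterexample_unsat :
    (¬ ∃ x y z : ℤ, 20 ∣ x ∧ 35 ∣ y ∧ 28 ∣ z ∧
      0 ≤ y - x ∧ y - x ≤ 5 ∧ 20 ≤ x - z ∧ x - z ≤ 24 ∧
      21 ≤ y - z ∧ y - z ≤ 28) ∧
    (∃ x y z : ℤ,
      0 ≤ y - x ∧ y - x ≤ 5 ∧ 20 ≤ x - z ∧ x - z ≤ 24 ∧
      21 ≤ y - z ∧ y - z ≤ 28) := by
  constructor
  · rintro ⟨x, y, z, hx, hy, hz, h⟩
    have h5 : (5:ℤ) ∣ y - x := dvd_sub (dvd_trans ⟨7, rfl⟩ hy) (dvd_trans ⟨4, rfl⟩ hx)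
    have h4 : (4:ℤ) ∣ x - z := dvd_sub (dvd_trans ⟨5, rfl⟩ hx) (dvd_trans ⟨7, rfl⟩ hz)
    have h7 : (7:ℤ) ∣ y - z := dvd_sub (dvd_trans ⟨5, rfl⟩ hy) (dvd_trans ⟨4, rfl⟩ hz)
    have e1 : y - x = 0 ∨ y - x = 5 := by omega
    have e2 : x - z = 20 ∨ x - z = 24 := by omega
    have e3 : y - z = 21 ∨ y - z = 28 := by omega
    omega
  · exact ⟨0, 5, -20, by norm_num⟩
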